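/- Let (λ_{d,i})_{d∈ℕ, i∈ℕ} be nonnegative real numbers such that for each d the sequence i ↦ λ_{d,i} is nonincreasing. (i) If there exist constants C, p > 0 and q ≥ 0 such that for all d ∈ ℕ and all ε ∈ (0,1] the set {i ∈ ℕ : λ_{d,i} > ε²} is finite with at most C·ε^{−p}·d^q elements, then for every τ > p/2, with f(d) = ⌈(1+C)·d^q⌉, one has sup_{d∈ℕ} d^{−2q/p} · ( Σ_{i≥f(d)} λ_{d,i}^τ )^{1/τ} ≤ C^{2/p} · ζ(2τ/p)^{1/τ} < ∞, where ζ is the Riemann zeta function. (ii) Conversely, if for some r ≥ 0, τ > 0, C > 0 and p, q ≥ 0, setting f(d) = ⌈C · (min(√(λ_{d,1}), 1))^{−p} · d^q⌉, the quantity C_τ = sup_{d∈ℕ} d^{−r} · ( Σ_{i≥f(d)} λ_{d,i}^τ )^{1/τ} is finite, then for every d ∈ ℕ and every ε ∈ (0,1] the set {i ∈ ℕ : λ_{d,i} > ε²} is finite with at most (C + C_τ^τ) · ε^{−max(p,2τ)} · d^{max(q, rτ)} elements. -/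

import Mathlib

open scoped ENNReal NNReal

noncomputable section

/-- The Riemann zeta function at a real argument `s > 1`, as the sum
`∑_{n=1}^∞ n^{-s}` in `[0,∞]`. -/
def zetaSum (s : ℝ) : ℝ≥0∞ := ∑' n : ℕ, ((n : ℝ≥0∞) + 1) ^ (-s)

/-- A version of Theorem 5.1 of Novak–Woźniakowski (absolute error criterion) not
assuming that the initial error equals one.  `Λ d i` is the `i`-th largest eigenvalue of
`T_d† T_d`; `#{i : λ_{d,i} > ε²}` is the information complexity `n(ε,d)`. -/
lemma zetaSum_lt_top {s : ℝ} (hs : 1 < s) : zetaSum s < ∞ := by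
  have hsum : Summable (fun n : ℕ => (((n : ℝ≥0) + 1) ^ (-s) : ℝ≥0)) := by
    rw [← NNReal.summable_coe]
    have h1 : ∀ n : ℕ, ((((n : ℝ≥0) + 1) ^ (-s) : ℝ≥0) : ℝ) = (((n : ℝ) + 1)) ^ (-s) := by
      intro n; rw [NNReal.coe_rpow]; norm_num
    simp only [h1]
    have h2 : Summable (fun n : ℕ => ((n : ℝ)) ^ (-s)) :=
      Real.summable_nat_rpow.2 (by linarith)
    have := (summable_nat_add_iff (f := fun n : ℕ => ((n : ℝ)) ^ (-s)) 1).2 h2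
    simpa using this
  have heq : zetaSum s = ∑' n : ℕ, ((((n : ℝ≥0) + 1) ^ (-s) : ℝ≥0) : ℝ≥0∞) := by
    unfold zetaSum
    congr 1; funext n
    have h0 : ((n : ℝ≥0∞) + 1) = ((((n : ℝ≥0) + 1) : ℝ≥0) : ℝ≥0∞) := by push_cast; ring
    rw [h0, ENNReal.coe_rpow_of_ne_zero (by positivity)]
  rw [heq]
  exact lt_of_le_of_ne le_top (ENNReal.tsum_coe_ne_top_iff_summable.2 hsum)

theorem stmt_2
    (Λ : ℕ → ℕ → ℝ)
    (hnn : ∀ d i : ℕ, 0 ≤ Λ d i)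
    (hmono : ∀ d i j : ℕ, 1 ≤ i → i ≤ j → Λ d j ≤ Λ d i) :
    -- (i) polynomial tractability implies uniform summability of the tails
    (∀ C p q : ℝ, 0 < C → 0 < p → 0 ≤ q →
      (∀ d : ℕ, 1 ≤ d → ∀ ε : ℝ, 0 < ε → ε ≤ 1 →
        {i : ℕ | 1 ≤ i ∧ ε ^ 2 < Λ d i}.Finite ∧
        ({i : ℕ | 1 ≤ i ∧ ε ^ 2 < Λ d i}.ncard : ℝ) ≤ C * ε ^ (-p) * (d : ℝ) ^ q) →
      ∀ τ : ℝ, p / 2 < τ →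
        (∀ d : ℕ, 1 ≤ d →
          ((d : ℝ≥0∞) ^ (-(2 * q / p))) *
            (∑' i : {i : ℕ // ⌈(1 + C) * (d : ℝ) ^ q⌉₊ ≤ i},
              ENNReal.ofReal (Λ d i.1) ^ τ) ^ (1 / τ)
          ≤ ENNReal.ofReal C ^ (2 / p) * zetaSum (2 * τ / p) ^ (1 / τ)) ∧
        ENNReal.ofReal C ^ (2 / p) * zetaSum (2 * τ / p) ^ (1 / τ) < ∞) ∧
    -- (ii) tail summability (with cut-offs depending on the initial error) implies
    -- polynomial tractability
    (∀ r τ C p q : ℝ, 0 ≤ r → 0 < τ → 0 < C → 0 ≤ p → 0 ≤ q →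
      ∀ Cτ : ℝ≥0∞,
        Cτ = (⨆ d : {d : ℕ // 1 ≤ d},
          ((d.1 : ℝ≥0∞) ^ (-r)) *
            (∑' i : {i : ℕ //
                ⌈C * (min (Real.sqrt (Λ d.1 1)) 1) ^ (-p) * (d.1 : ℝ) ^ q⌉₊ ≤ i},
              ENNReal.ofReal (Λ d.1 i.1) ^ τ) ^ (1 / τ)) →
        Cτ ≠ ∞ →
        ∀ d : ℕ, 1 ≤ d → ∀ ε : ℝ, 0 < ε → ε ≤ 1 →
          {i : ℕ | 1 ≤ i ∧ ε ^ 2 < Λ d i}.Finite ∧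
          ({i : ℕ | 1 ≤ i ∧ ε ^ 2 < Λ d i}.ncard : ℝ) ≤
            (C + Cτ.toReal ^ τ) * ε ^ (-(max p (2 * τ))) * (d : ℝ) ^ (max q (r * τ))) := by
  constructor
  · intro C p q hC hp hq h τ hτ
    have hτ0 : 0 < τ := lt_trans (by positivity) hτ
    have hs1' : 1 < 2 * τ / p := by rw [lt_div_iff₀ hp]; linarith
    constructor
    · intro d hd
      have hτ0 : 0 < τ := lt_trans (by positivity) hτ
      have hdR : (1:ℝ) ≤ (d:ℝ) := by exact_mod_cast hd
      have hd1 : (1:ℝ) ≤ (d:ℝ) ^ q := by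
        calc (1:ℝ) = (d:ℝ) ^ (0:ℝ) := (Real.rpow_zero _).symm
        _ ≤ (d:ℝ) ^ q := Real.rpow_le_rpow_of_exponent_le hdR hq
      set s : ℝ := 2 * τ / p with hs_def
      have hs1 : 1 < s := by rw [hs_def, lt_div_iff₀ hp]; linarith
      set N : ℕ := ⌈(1 + C) * (d : ℝ) ^ q⌉₊ with hN_def
      -- key pointwise bound
      have key : ∀ i : ℕ, N ≤ i → Λ d i ≤ (C * (d:ℝ)^q / i) ^ (2/p) := by
        intro i hi
        have hiR : (1 + C) * (d:ℝ)^q ≤ (i:ℝ) :=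
          le_trans (Nat.le_ceil _) (by exact_mod_cast hi)
        have hCd : 0 < C * (d:ℝ)^q := by positivity
        have hCdi : C * (d:ℝ)^q < (i:ℝ) := by nlinarith
        have hi0 : 0 < (i:ℝ) := lt_trans hCd hCdi
        have hi1 : 1 ≤ i := by
          have : 0 < i := by exact_mod_cast hi0
          omega
        have step : ∀ ε : ℝ, 0 < ε → ε ≤ 1 → ε^2 < Λ d i → (i:ℝ) ≤ C * ε^(-p) * (d:ℝ)^q := by
          intro ε hε hε1 hεΛ
          obtain ⟨hfin, hcard⟩ := h d hd ε hε hε1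
          have hsub : (↑(Finset.Icc 1 i) : Set ℕ) ⊆ {j : ℕ | 1 ≤ j ∧ ε^2 < Λ d j} := by
            intro j hj
            simp only [Finset.coe_Icc, Set.mem_Icc] at hj
            exact ⟨hj.1, lt_of_lt_of_le hεΛ (hmono d j i hj.1 hj.2)⟩
          have hcard2 : i ≤ {j : ℕ | 1 ≤ j ∧ ε^2 < Λ d j}.ncard := by
            calc i = (Finset.Icc 1 i).card := by rw [Nat.card_Icc]; omega
            _ = (↑(Finset.Icc 1 i) : Set ℕ).ncard := (Set.ncard_coe_finset _).symm
            _ ≤ _ := Set.ncard_le_ncard hsub hfin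
          calc (i:ℝ) ≤ ({j : ℕ | 1 ≤ j ∧ ε^2 < Λ d j}.ncard : ℝ) := by exact_mod_cast hcard2
          _ ≤ C * ε^(-p) * (d:ℝ)^q := hcard
        by_contra hcon
        push_neg at hcon
        set b : ℝ := (C * (d:ℝ)^q / i) ^ (1/p) with hb_def
        have hbase : 0 < C * (d:ℝ)^q / i := by positivity
        have hb0 : 0 < b := Real.rpow_pos_of_pos hbase _
        have hb1 : b < 1 := by
          apply Real.rpow_lt_one hbase.le _ (by positivity)
          rw [div_lt_one hi0]; exact hCdi
        have hb2 : b^2 = (C * (d:ℝ)^q / i) ^ (2/p) := by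
          rw [hb_def, ← Real.rpow_natCast ((C * (d:ℝ)^q / i) ^ (1/p)) 2,
            ← Real.rpow_mul hbase.le]
          congr 1; ring
        have hbp : C * b^(-p) * (d:ℝ)^q = (i:ℝ) := by
          rw [hb_def, ← Real.rpow_mul hbase.le]
          have : 1/p * -p = -1 := by field_simp
          rw [this, Real.rpow_neg_one]
          field_simp
        rcases le_or_gt (Λ d i) 1 with hΛ1 | hΛ1
        · have hbΛ : b < Real.sqrt (Λ d i) := by
            rw [show b = Real.sqrt (b^2) from (Real.sqrt_sq hb0.le).symm]
            exact Real.sqrt_lt_sqrt (sq_nonneg b) (hb2 ▸ hcon)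
          set ε : ℝ := (b + Real.sqrt (Λ d i)) / 2 with hε_def
          have hεb : b < ε := by rw [hε_def]; linarith
          have hεs : ε < Real.sqrt (Λ d i) := by rw [hε_def]; linarith
          have hε0 : 0 < ε := lt_trans hb0 hεb
          have hε1 : ε ≤ 1 := le_trans hεs.le (Real.sqrt_le_one.mpr hΛ1)
          have hε2 : ε^2 < Λ d i := (Real.lt_sqrt hε0.le).1 hεs
          have h1 := step ε hε0 hε1 hε2
          have hinv : ε^(-p) < b^(-p) := by
            rw [Real.rpow_neg hε0.le, Real.rpow_neg hb0.le]
            exact inv_strictAnti₀ (Real.rpow_pos_of_pos hb0 _)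
              (Real.rpow_lt_rpow hb0.le hεb hp)
          have h2 : C * ε^(-p) * (d:ℝ)^q < C * b^(-p) * (d:ℝ)^q := by
            apply mul_lt_mul_of_pos_right _ (by positivity)
            exact mul_lt_mul_of_pos_left hinv hC
          linarith [hbp ▸ h2]
        · have h1 := step 1 one_pos le_rfl (by simpa using hΛ1)
          rw [Real.one_rpow] at h1
          linarith
      -- now the ENNReal computation
      have hterm : ∀ i : {i : ℕ // N ≤ i},
          ENNReal.ofReal (Λ d i.1) ^ τ ≤
            (ENNReal.ofReal (C * (d:ℝ)^q)) ^ s * ((i.1 : ℝ≥0∞)) ^ (-s) := by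
        intro ⟨i, hi⟩
        have hiR : (1 + C) * (d:ℝ)^q ≤ (i:ℝ) :=
          le_trans (Nat.le_ceil _) (by exact_mod_cast hi)
        have hCd : 0 < C * (d:ℝ)^q := by positivity
        have hi0 : 0 < (i:ℝ) := by nlinarith
        have hbase : 0 < C * (d:ℝ)^q / i := by positivity
        calc ENNReal.ofReal (Λ d i) ^ τ
            ≤ ENNReal.ofReal ((C * (d:ℝ)^q / i) ^ (2/p)) ^ τ := by
              gcongr
              exact key i hi
          _ = ENNReal.ofReal (C * (d:ℝ)^q / i) ^ ((2/p) * τ) := by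
              rw [← ENNReal.ofReal_rpow_of_pos hbase, ← ENNReal.rpow_mul]
          _ = ENNReal.ofReal (C * (d:ℝ)^q / i) ^ s := by
              rw [hs_def]; ring_nf
          _ = (ENNReal.ofReal (C * (d:ℝ)^q) / ENNReal.ofReal (i:ℝ)) ^ s := by
              rw [ENNReal.ofReal_div_of_pos hi0]
          _ = (ENNReal.ofReal (C * (d:ℝ)^q)) ^ s * ((i:ℝ≥0∞)) ^ (-s) := by
              rw [ENNReal.div_rpow_of_nonneg _ _ (by positivity : (0:ℝ) ≤ s),
                ENNReal.ofReal_natCast, div_eq_mul_inv, ← ENNReal.rpow_neg]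
      have hN1 : 1 ≤ N := by
        rw [hN_def]
        rw [Nat.one_le_ceil_iff]
        nlinarith
      have htail : (∑' i : {i : ℕ // N ≤ i}, ((i.1 : ℝ≥0∞)) ^ (-s)) ≤ zetaSum s := by
        have hinj : Function.Injective (fun i : {i : ℕ // N ≤ i} => i.1 - 1) := by
          intro ⟨a, ha⟩ ⟨b, hb⟩ hab
          simp only at hab
          have : a = b := by omega
          simpa using this
        have := ENNReal.tsum_comp_le_tsum_of_injective hinj
          (fun n : ℕ => ((n : ℝ≥0∞) + 1) ^ (-s))
        refine le_trans (le_of_eq ?_) this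
        congr 1; funext ⟨i, hi⟩
        have h1 : i - 1 + 1 = i := by omega
        simp only
        congr 1
        rw [show ((i:ℝ≥0∞)) = (((i - 1 + 1 : ℕ)):ℝ≥0∞) by rw [h1]]
        push_cast
        ring
      set A : ℝ≥0∞ := ENNReal.ofReal (C * (d:ℝ)^q) with hA_def
      have hsum_le : (∑' i : {i : ℕ // N ≤ i}, ENNReal.ofReal (Λ d i.1) ^ τ)
          ≤ A ^ s * zetaSum s := by
        calc (∑' i : {i : ℕ // N ≤ i}, ENNReal.ofReal (Λ d i.1) ^ τ)
            ≤ ∑' i : {i : ℕ // N ≤ i}, A ^ s * ((i.1 : ℝ≥0∞)) ^ (-s) :=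
              ENNReal.tsum_le_tsum hterm
          _ = A ^ s * ∑' i : {i : ℕ // N ≤ i}, ((i.1 : ℝ≥0∞)) ^ (-s) :=
              ENNReal.tsum_mul_left
          _ ≤ A ^ s * zetaSum s := by gcongr
      have hAfin : A ^ s ≠ ∞ := by
        apply ENNReal.rpow_ne_top_of_nonneg (by positivity)
        exact ENNReal.ofReal_ne_top
      have hzfin : zetaSum s ≠ ∞ := (zetaSum_lt_top hs1).ne
      calc ((d : ℝ≥0∞) ^ (-(2 * q / p))) *
          (∑' i : {i : ℕ // N ≤ i}, ENNReal.ofReal (Λ d i.1) ^ τ) ^ (1 / τ)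
          ≤ ((d : ℝ≥0∞) ^ (-(2 * q / p))) * (A ^ s * zetaSum s) ^ (1 / τ) := by
            gcongr
        _ = ((d : ℝ≥0∞) ^ (-(2 * q / p))) * (A ^ (s * (1/τ)) * zetaSum s ^ (1/τ)) := by
            rw [ENNReal.mul_rpow_of_ne_top hAfin hzfin, ENNReal.rpow_mul]
        _ = (((d : ℝ≥0∞) ^ (-(2 * q / p))) * A ^ (2/p)) * zetaSum s ^ (1/τ) := by
            rw [show s * (1/τ) = 2/p by rw [hs_def]; field_simp]
            ring
        _ = ENNReal.ofReal C ^ (2 / p) * zetaSum s ^ (1 / τ) := by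
            congr 1
            rw [hA_def, ENNReal.ofReal_mul hC.le,
              ENNReal.mul_rpow_of_ne_top ENNReal.ofReal_ne_top ENNReal.ofReal_ne_top]
            have hd0 : (d:ℝ≥0∞) ≠ 0 := Nat.cast_ne_zero.2 (by omega)
            have : ENNReal.ofReal ((d:ℝ)^q) ^ (2/p) = (d:ℝ≥0∞) ^ (q * (2/p)) := by
              rw [ENNReal.ofReal_rpow_of_pos (by positivity : (0:ℝ) < (d:ℝ)^q),
                ← Real.rpow_mul (by positivity),
                ← ENNReal.ofReal_rpow_of_pos (by positivity : (0:ℝ) < (d:ℝ)),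
                ENNReal.ofReal_natCast]
            rw [this]
            rw [show q * (2/p) = 2*q/p by ring]
            rw [mul_comm (ENNReal.ofReal C ^ (2/p)) _, ← mul_assoc, ← ENNReal.rpow_add _ _
              hd0 (by simp), neg_add_cancel, ENNReal.rpow_zero, one_mul]
    · apply ENNReal.mul_lt_top
      · exact ENNReal.rpow_lt_top_of_nonneg (by positivity) ENNReal.ofReal_ne_top
      · exact ENNReal.rpow_lt_top_of_nonneg (by positivity) (zetaSum_lt_top hs1').ne
  · intro r τ C p q hr hτ hC hp hq Cτ hCτ hCtop d hd ε hε hε1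
    have hdR : (1:ℝ) ≤ (d:ℝ) := by exact_mod_cast hd
    have hd0 : (d:ℝ≥0∞) ≠ 0 := Nat.cast_ne_zero.2 (by omega)
    have hdtop : (d:ℝ≥0∞) ≠ ∞ := ENNReal.natCast_ne_top d
    set m : ℝ := min (Real.sqrt (Λ d 1)) 1 with hm_def
    set N : ℕ := ⌈C * m ^ (-p) * (d:ℝ) ^ q⌉₊ with hN_def
    set S : Set ℕ := {i : ℕ | 1 ≤ i ∧ ε ^ 2 < Λ d i} with hS_def
    set T : ℝ≥0∞ := ∑' i : {i : ℕ // N ≤ i}, ENNReal.ofReal (Λ d i.1) ^ τ with hT_def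
    -- bound on T
    have hsup : ((d : ℝ≥0∞) ^ (-r)) * T ^ (1 / τ) ≤ Cτ := by
      rw [hCτ]
      exact le_iSup (fun x : {d : ℕ // 1 ≤ d} => ((x.1 : ℝ≥0∞) ^ (-r)) *
        (∑' i : {i : ℕ //
            ⌈C * (min (Real.sqrt (Λ x.1 1)) 1) ^ (-p) * (x.1 : ℝ) ^ q⌉₊ ≤ i},
          ENNReal.ofReal (Λ x.1 i.1) ^ τ) ^ (1 / τ)) ⟨d, hd⟩
    have hT1 : T ^ (1 / τ) ≤ (d : ℝ≥0∞) ^ r * Cτ := by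
      have h1 : (d : ℝ≥0∞) ^ r * (((d : ℝ≥0∞) ^ (-r)) * T ^ (1 / τ)) ≤ (d : ℝ≥0∞) ^ r * Cτ := by
        gcongr
      rwa [← mul_assoc, ← ENNReal.rpow_add _ _ hd0 hdtop, add_neg_cancel,
        ENNReal.rpow_zero, one_mul] at h1
    have hT : T ≤ (d : ℝ≥0∞) ^ (r * τ) * Cτ ^ τ := by
      have h2 : (T ^ (1 / τ)) ^ τ ≤ ((d : ℝ≥0∞) ^ r * Cτ) ^ τ :=
        ENNReal.rpow_le_rpow hT1 hτ.le
      rwa [← ENNReal.rpow_mul, one_div, inv_mul_cancel₀ hτ.ne', ENNReal.rpow_one,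
        ENNReal.mul_rpow_of_ne_top (ENNReal.rpow_ne_top_of_nonneg hr hdtop) hCtop,
        ← ENNReal.rpow_mul] at h2
    have hXtop : (d : ℝ≥0∞) ^ (r * τ) * Cτ ^ τ ≠ ∞ :=
      ENNReal.mul_ne_top (ENNReal.rpow_ne_top_of_nonneg (by positivity) hdtop)
        (ENNReal.rpow_ne_top_of_nonneg hτ.le hCtop)
    -- the threshold constant
    set c : ℝ≥0∞ := ENNReal.ofReal (ε ^ 2) ^ τ with hc_def
    have hc0 : c ≠ 0 := by
      apply (ENNReal.rpow_pos _ ENNReal.ofReal_ne_top).ne'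
      rw [ENNReal.ofReal_pos]; positivity
    obtain ⟨hfA, hcardA⟩ := ENNReal.finset_card_const_le_le_of_tsum_le hXtop hT (ε := c) hc0
    set A : Set {i : ℕ // N ≤ i} := {x | c ≤ ENNReal.ofReal (Λ d x.1) ^ τ} with hA_def
    -- S is contained in the union
    have hsub : S ⊆ ↑(Finset.Ico 1 N) ∪ (Subtype.val '' A) := by
      rintro i ⟨hi1, hiε⟩
      rcases lt_or_ge i N with hiN | hiN
      · left; simp only [Finset.coe_Ico, Set.mem_Ico]; exact ⟨hi1, hiN⟩
      · right
        refine ⟨⟨i, hiN⟩, ?_, rfl⟩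
        rw [hA_def]
        simp only [Set.mem_setOf_eq]
        exact ENNReal.rpow_le_rpow (ENNReal.ofReal_le_ofReal hiε.le) hτ.le
    have hfin : S.Finite :=
      Set.Finite.subset (Set.Finite.union (Finset.Ico 1 N).finite_toSet (hfA.image _)) hsub
    refine ⟨hfin, ?_⟩
    -- cardinality bound
    have hcard1 : S.ncard ≤ (N - 1) + hfA.toFinset.card := by
      calc S.ncard ≤ (↑(Finset.Ico 1 N) ∪ (Subtype.val '' A) : Set ℕ).ncard :=
            Set.ncard_le_ncard hsub (Set.Finite.union (Finset.Ico 1 N).finite_toSet (hfA.image _))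
        _ ≤ (↑(Finset.Ico 1 N) : Set ℕ).ncard + (Subtype.val '' A).ncard :=
            Set.ncard_union_le _ _
        _ = (N - 1) + hfA.toFinset.card := by
            rw [Set.ncard_coe_finset, Nat.card_Ico,
              Set.ncard_image_of_injective _ Subtype.val_injective,
              Set.ncard_eq_toFinset_card _ hfA]
    -- real bound on hfA.toFinset.card
    have hcardA' : (hfA.toFinset.card : ℝ) ≤ Cτ.toReal ^ τ * ε ^ (-(2*τ)) * (d:ℝ) ^ (r*τ) := by
      have h3 : ((hfA.toFinset.card : ℕ) : ℝ≥0∞).toReal ≤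
          (((d : ℝ≥0∞) ^ (r * τ) * Cτ ^ τ) / c).toReal := by
        apply ENNReal.toReal_mono _ hcardA
        exact (ENNReal.div_lt_top hXtop hc0).ne
      have hceq : c.toReal = ε ^ (2*τ) := by
        rw [hc_def, ← ENNReal.toReal_rpow, ENNReal.toReal_ofReal (by positivity),
          ← Real.rpow_natCast ε 2, ← Real.rpow_mul hε.le]
        norm_num
      rw [show ((hfA.toFinset.card : ℕ) : ℝ≥0∞).toReal = (hfA.toFinset.card : ℝ) from rfl] at h3
      rw [ENNReal.toReal_div, ENNReal.toReal_mul, ← ENNReal.toReal_rpow,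
        ← ENNReal.toReal_rpow, hceq] at h3
      calc (hfA.toFinset.card : ℝ) ≤ (d:ℝ) ^ (r*τ) * Cτ.toReal ^ τ / ε ^ (2*τ) := h3
        _ = Cτ.toReal ^ τ * ε ^ (-(2*τ)) * (d:ℝ) ^ (r*τ) := by
            rw [Real.rpow_neg hε.le]; ring
    -- bound on N - 1
    have hx0 : 0 ≤ C * m ^ (-p) * (d:ℝ) ^ q := by
      have : 0 ≤ m := le_min (Real.sqrt_nonneg _) zero_le_one
      positivity
    have hN1 : ((N - 1 : ℕ) : ℝ) ≤ C * m ^ (-p) * (d:ℝ) ^ q := by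
      rcases Nat.eq_zero_or_pos N with h0 | h0
      · simp [h0]; exact hx0
      · have h1 : ((N:ℝ)) < C * m ^ (-p) * (d:ℝ) ^ q + 1 := Nat.ceil_lt_add_one hx0
        have h2 : ((N - 1 : ℕ) : ℝ) = (N : ℝ) - 1 := by
          push_cast [Nat.cast_sub h0]; ring
        linarith
    -- case split on S empty
    rcases Set.eq_empty_or_nonempty S with hSe | ⟨i, hi1, hiε⟩
    · rw [hSe]
      simp only [Set.ncard_empty, Nat.cast_zero]
      have h1 : (0:ℝ) ≤ C + Cτ.toReal ^ τ := by
        have : (0:ℝ) ≤ Cτ.toReal ^ τ := Real.rpow_nonneg ENNReal.toReal_nonneg τ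
        linarith
      positivity
    · -- m ≥ ε
      have hΛ1 : ε ^ 2 < Λ d 1 := lt_of_lt_of_le hiε (hmono d 1 i le_rfl hi1)
      have hεm : ε ≤ m := by
        apply le_min _ hε1
        rw [Real.le_sqrt hε.le (hnn d 1)]
        exact hΛ1.le
      have hm0 : 0 < m := lt_of_lt_of_le hε hεm
      have hmp : m ^ (-p) ≤ ε ^ (-p) := by
        rw [Real.rpow_neg hm0.le, Real.rpow_neg hε.le]
        exact inv_anti₀ (Real.rpow_pos_of_pos hε _)
          (Real.rpow_le_rpow hε.le hεm hp)
      -- exponent comparisons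
      have hεmax1 : ε ^ (-p) ≤ ε ^ (-(max p (2*τ))) :=
        Real.rpow_le_rpow_of_exponent_ge hε hε1 (neg_le_neg (le_max_left _ _))
      have hεmax2 : ε ^ (-(2*τ)) ≤ ε ^ (-(max p (2*τ))) :=
        Real.rpow_le_rpow_of_exponent_ge hε hε1 (neg_le_neg (le_max_right _ _))
      have hdmax1 : (d:ℝ) ^ q ≤ (d:ℝ) ^ (max q (r*τ)) :=
        Real.rpow_le_rpow_of_exponent_le hdR (le_max_left _ _)
      have hdmax2 : (d:ℝ) ^ (r*τ) ≤ (d:ℝ) ^ (max q (r*τ)) :=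
        Real.rpow_le_rpow_of_exponent_le hdR (le_max_right _ _)
      have hεp : (0:ℝ) < ε ^ (-p) := Real.rpow_pos_of_pos hε _
      have hKnn : (0:ℝ) ≤ Cτ.toReal ^ τ := Real.rpow_nonneg ENNReal.toReal_nonneg τ
      have hfirst : ((N - 1 : ℕ) : ℝ) ≤ C * ε ^ (-(max p (2*τ))) * (d:ℝ) ^ (max q (r*τ)) := by
        calc ((N - 1 : ℕ) : ℝ) ≤ C * m ^ (-p) * (d:ℝ) ^ q := hN1
          _ ≤ C * ε ^ (-p) * (d:ℝ) ^ q := by gcongr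
          _ ≤ C * ε ^ (-(max p (2*τ))) * (d:ℝ) ^ (max q (r*τ)) := by gcongr
      have hsecond : (hfA.toFinset.card : ℝ) ≤
          Cτ.toReal ^ τ * ε ^ (-(max p (2*τ))) * (d:ℝ) ^ (max q (r*τ)) := by
        calc (hfA.toFinset.card : ℝ) ≤ Cτ.toReal ^ τ * ε ^ (-(2*τ)) * (d:ℝ) ^ (r*τ) := hcardA'
          _ ≤ _ := by gcongr
      have htotal : (S.ncard : ℝ) ≤ ((N - 1 : ℕ) : ℝ) + (hfA.toFinset.card : ℝ) := by
        exact_mod_cast hcard1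
      calc (S.ncard : ℝ) ≤ _ := htotal
        _ ≤ C * ε ^ (-(max p (2*τ))) * (d:ℝ) ^ (max q (r*τ)) +
            Cτ.toReal ^ τ * ε ^ (-(max p (2*τ))) * (d:ℝ) ^ (max q (r*τ)) :=
          add_le_add hfirst hsecond
        _ = (C + Cτ.toReal ^ τ) * ε ^ (-(max p (2 * τ))) * (d : ℝ) ^ (max q (r * τ)) := by ring
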